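/- Let k be a field of characteristic zero, (A, ∗) a finite-dimensional Zinbiel algebra with a nondegenerate bilinear form ϖ, {e₁,…,e_n} a basis of A and {f₁,…,f_n} the dual basis with respect to ϖ (i.e. ϖ(fᵢ, eⱼ) = δ_{ij}), and r = Σᵢ eᵢ ⊗ fᵢ ∈ A ⊗ A. Then r is a symmetric solution of the Zinbiel Yang–Baxter equation in (A, ∗) if and only if (A, ∗, ϖ) is a quasi-Frobenius Zinbiel algebra. -/

import Mathlib

open TensorProduct

noncomputable section

def IsZinbiel {k A : Type} [Field k] [AddCommGroup A] [Module k A]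
    (ast : A →ₗ[k] A →ₗ[k] A) : Prop :=
  ∀ a₁ a₂ a₃ : A, ast a₁ (ast a₂ a₃) = ast (ast a₁ a₂) a₃ + ast (ast a₂ a₁) a₃

def IsPreLie {k A : Type} [Field k] [AddCommGroup A] [Module k A]
    (circ : A →ₗ[k] A →ₗ[k] A) : Prop :=
  ∀ a₁ a₂ a₃ : A,
    circ (circ a₁ a₂) a₃ - circ a₁ (circ a₂ a₃)
      = circ (circ a₂ a₁) a₃ - circ a₂ (circ a₁ a₃)

def IsPerm {k B : Type} [Field k] [AddCommGroup B] [Module k B]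
    (dia : B →ₗ[k] B →ₗ[k] B) : Prop :=
  ∀ b₁ b₂ b₃ : B,
    dia b₁ (dia b₂ b₃) = dia (dia b₁ b₂) b₃ ∧
    dia (dia b₁ b₂) b₃ = dia (dia b₂ b₁) b₃

def IsPrePoisson {k A : Type} [Field k] [AddCommGroup A] [Module k A]
    (ast circ : A →ₗ[k] A →ₗ[k] A) : Prop :=
  IsZinbiel ast ∧ IsPreLie circ ∧
  (∀ a₁ a₂ a₃ : A,
    ast (circ a₁ a₂ - circ a₂ a₁) a₃ = circ a₁ (ast a₂ a₃) - ast a₂ (circ a₁ a₃)) ∧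
  (∀ a₁ a₂ a₃ : A,
    circ (ast a₁ a₂ + ast a₂ a₁) a₃ = ast a₁ (circ a₂ a₃) + ast a₂ (circ a₁ a₃))

def IsPoisson {k P : Type} [Field k] [AddCommGroup P] [Module k P]
    (mul br : P →ₗ[k] P →ₗ[k] P) : Prop :=
  (∀ u v : P, mul u v = mul v u) ∧
  (∀ u v w : P, mul (mul u v) w = mul u (mul v w)) ∧
  (∀ u v : P, br u v = - br v u) ∧
  (∀ u v w : P, br (br u v) w + br (br v w) u + br (br w u) v = 0) ∧
  (∀ u v w : P, br u (mul v w) = mul (br u v) w + mul v (br u w))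

def idm (k M : Type) [Field k] [AddCommGroup M] [Module k M] : M →ₗ[k] M :=
  LinearMap.id

def tau (k M : Type) [Field k] [AddCommGroup M] [Module k M] :
    M ⊗[k] M →ₗ[k] M ⊗[k] M :=
  (TensorProduct.comm k M M).toLinearMap

def unassoc (k M : Type) [Field k] [AddCommGroup M] [Module k M] :
    M ⊗[k] (M ⊗[k] M) →ₗ[k] (M ⊗[k] M) ⊗[k] M :=
  (TensorProduct.assoc k M M M).symm.toLinearMap

def intch (k A B : Type) [Field k] [AddCommGroup A] [Module k A]
    [AddCommGroup B] [Module k B] :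
    (A ⊗[k] A) ⊗[k] (B ⊗[k] B) →ₗ[k] (A ⊗[k] B) ⊗[k] (A ⊗[k] B) :=
  (TensorProduct.tensorTensorTensorComm k A A B B).toLinearMap

def IsZinbielCo {k A : Type} [Field k] [AddCommGroup A] [Module k A]
    (ϑ : A →ₗ[k] A ⊗[k] A) : Prop :=
  ∀ a : A,
    TensorProduct.map ϑ (idm k A) (ϑ a)
      + TensorProduct.map (tau k A) (idm k A) (TensorProduct.map ϑ (idm k A) (ϑ a))
    = unassoc k A (TensorProduct.map (idm k A) ϑ (ϑ a))

def IsPermCo {k B : Type} [Field k] [AddCommGroup B] [Module k B]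
    (ν : B →ₗ[k] B ⊗[k] B) : Prop :=
  ∀ b : B,
    TensorProduct.map ν (idm k B) (ν b)
      = unassoc k B (TensorProduct.map (idm k B) ν (ν b)) ∧
    TensorProduct.map ν (idm k B) (ν b)
      = TensorProduct.map (tau k B) (idm k B) (TensorProduct.map ν (idm k B) (ν b))

def IsPreLieCo {k A : Type} [Field k] [AddCommGroup A] [Module k A]
    (θ : A →ₗ[k] A ⊗[k] A) : Prop :=
  ∀ a : A,
    unassoc k A (TensorProduct.map (idm k A) θ (θ a))
      - TensorProduct.map (tau k A) (idm k A)
          (unassoc k A (TensorProduct.map (idm k A) θ (θ a)))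
    = TensorProduct.map θ (idm k A) (θ a)
      - TensorProduct.map (tau k A) (idm k A) (TensorProduct.map θ (idm k A) (θ a))

def Zexp {k A : Type} [Field k] [AddCommGroup A] [Module k A]
    (ast : A →ₗ[k] A →ₗ[k] A) {p : ℕ} (x y : Fin p → A) : (A ⊗[k] A) ⊗[k] A :=
  ∑ i : Fin p, ∑ j : Fin p,
    (((ast (x i) (x j)) ⊗ₜ[k] (y j)) ⊗ₜ[k] (y i)
      + ((y j) ⊗ₜ[k] (ast (x i) (x j))) ⊗ₜ[k] (y i)
      + ((x i) ⊗ₜ[k] (x j)) ⊗ₜ[k] (ast (y i) (y j))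
      + ((x j) ⊗ₜ[k] (x i)) ⊗ₜ[k] (ast (y i) (y j))
      - ((x i) ⊗ₜ[k] (ast (y i) (x j))) ⊗ₜ[k] (y j)
      - ((x j) ⊗ₜ[k] (ast (x i) (y j))) ⊗ₜ[k] (y i)
      - ((ast (x i) (y j)) ⊗ₜ[k] (x j)) ⊗ₜ[k] (y i)
      - ((ast (y i) (x j)) ⊗ₜ[k] (x i)) ⊗ₜ[k] (y j))

def PLexp {k A : Type} [Field k] [AddCommGroup A] [Module k A]
    (circ : A →ₗ[k] A →ₗ[k] A) {p : ℕ} (x y : Fin p → A) : (A ⊗[k] A) ⊗[k] A :=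
  ∑ i : Fin p, ∑ j : Fin p,
    (((circ (x i) (x j)) ⊗ₜ[k] (y j)) ⊗ₜ[k] (y i)
      + ((x j) ⊗ₜ[k] (circ (x i) (y j))) ⊗ₜ[k] (y i)
      + ((circ (y i) (x j)) ⊗ₜ[k] (x i)) ⊗ₜ[k] (y j)
      + ((x j) ⊗ₜ[k] (x i)) ⊗ₜ[k] (circ (y i) (y j))
      - ((y j) ⊗ₜ[k] (circ (x i) (x j))) ⊗ₜ[k] (y i)
      - ((x i) ⊗ₜ[k] (circ (y i) (x j))) ⊗ₜ[k] (y j)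
      - ((circ (x i) (y j)) ⊗ₜ[k] (x j)) ⊗ₜ[k] (y i)
      - ((x i) ⊗ₜ[k] (x j)) ⊗ₜ[k] (circ (y i) (y j)))

def AYexp {k P : Type} [Field k] [AddCommGroup P] [Module k P]
    (m : P →ₗ[k] P →ₗ[k] P) {ι : Type} [Fintype ι] (u v : ι → P) :
    (P ⊗[k] P) ⊗[k] P :=
  ∑ α : ι, ∑ β : ι,
    (((m (u α) (u β)) ⊗ₜ[k] (v α)) ⊗ₜ[k] (v β)
      + ((u α) ⊗ₜ[k] (m (v α) (u β))) ⊗ₜ[k] (v β)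
      - ((u β) ⊗ₜ[k] (u α)) ⊗ₜ[k] (m (v α) (v β)))

def CYexp {k P : Type} [Field k] [AddCommGroup P] [Module k P]
    (br : P →ₗ[k] P →ₗ[k] P) {ι : Type} [Fintype ι] (u v : ι → P) :
    (P ⊗[k] P) ⊗[k] P :=
  ∑ α : ι, ∑ β : ι,
    (((br (u α) (u β)) ⊗ₜ[k] (v α)) ⊗ₜ[k] (v β)
      + ((u α) ⊗ₜ[k] (u β)) ⊗ₜ[k] (br (v α) (v β))
      + ((u α) ⊗ₜ[k] (br (v α) (u β))) ⊗ₜ[k] (v β))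

def sharp (k : Type) [Field k] {V : Type} [AddCommGroup V] [Module k V]
    (s : V ⊗[k] V) (ξ : V →ₗ[k] k) : V :=
  TensorProduct.lid k V (LinearMap.rTensor V ξ s)

abbrev PermB (k : Type) [Field k] : Type := ((ℤ × ℤ) × Fin 2) →₀ k

def bB (k : Type) [Field k] (i₁ i₂ : ℤ) (s : Fin 2) : PermB k :=
  Finsupp.single ((i₁, i₂), s) 1


-- Auxiliary material for statement13
namespace Statement13Aux

variable {k A : Type} [Field k] [AddCommGroup A] [Module k A]

def aphi2 (ϖ : A →ₗ[k] A →ₗ[k] k) (a b : A) : A ⊗[k] A →ₗ[k] k :=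
  TensorProduct.lift ((ϖ a).smulRight (ϖ b))

def aphi3 (ϖ : A →ₗ[k] A →ₗ[k] k) (a b c : A) : (A ⊗[k] A) ⊗[k] A →ₗ[k] k :=
  TensorProduct.lift ((aphi2 ϖ a b).smulRight (ϖ c))

@[simp] lemma aphi2_tmul (ϖ : A →ₗ[k] A →ₗ[k] k) (a b x y : A) :
    aphi2 ϖ a b (x ⊗ₜ[k] y) = ϖ a x * ϖ b y := by
  simp [aphi2, smul_eq_mul]

@[simp] lemma aphi3_tmul (ϖ : A →ₗ[k] A →ₗ[k] k) (a b c x y z : A) :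
    aphi3 ϖ a b c ((x ⊗ₜ[k] y) ⊗ₜ[k] z) = ϖ a x * ϖ b y * ϖ c z := by
  simp [aphi3, smul_eq_mul]

lemma acoord (ϖ : A →ₗ[k] A →ₗ[k] k) {n : ℕ} (e : Module.Basis (Fin n) k A) (f : Fin n → A)
    (hdual : ∀ i j : Fin n, ϖ (f i) (e j) = if i = j then 1 else 0) (a : A) (i : Fin n) :
    ϖ (f i) a = e.repr a i := by
  conv_lhs => rw [← e.sum_repr a]
  simp only [map_sum, map_smul, smul_eq_mul, hdual, mul_ite, mul_one, mul_zero]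
  simp

lemma aE1 (ϖ : A →ₗ[k] A →ₗ[k] k) {n : ℕ} (e : Module.Basis (Fin n) k A) (f : Fin n → A)
    (hdual : ∀ i j : Fin n, ϖ (f i) (e j) = if i = j then 1 else 0) (a : A) :
    ∑ i : Fin n, ϖ (f i) a • e i = a := by
  simp_rw [acoord ϖ e f hdual a]
  exact e.sum_repr a

lemma aE3 (ϖ : A →ₗ[k] A →ₗ[k] k)
    (hnd : ∀ a : A, (∀ a' : A, ϖ a a' = 0) → a = 0)
    {n : ℕ} (e : Module.Basis (Fin n) k A) (f : Fin n → A)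
    (hdual : ∀ i j : Fin n, ϖ (f i) (e j) = if i = j then 1 else 0) (a : A) :
    ∑ i : Fin n, ϖ a (e i) • f i = a := by
  have h : ∀ j, ϖ ((∑ i : Fin n, ϖ a (e i) • f i) - a) (e j) = 0 := by
    intro j
    simp only [map_sub, map_sum, map_smul, LinearMap.sub_apply, LinearMap.sum_apply,
      LinearMap.smul_apply, smul_eq_mul, hdual, mul_ite, mul_one, mul_zero]
    simp
  have h2 : ϖ ((∑ i : Fin n, ϖ a (e i) • f i) - a) = 0 := e.ext fun j => by simpa using h j
  exact sub_eq_zero.mp (hnd _ (fun a' => by rw [h2]; rfl))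

lemma acollapse (ast : A →ₗ[k] A →ₗ[k] A) (g : A →ₗ[k] k) {n : ℕ}
    (s t : Fin n → k) (p q : Fin n → A) :
    ∑ i : Fin n, ∑ j : Fin n, s i * t j * g (ast (p i) (q j))
      = g (ast (∑ i : Fin n, s i • p i) (∑ j : Fin n, t j • q j)) := by
  simp only [map_sum, map_smul, LinearMap.sum_apply, LinearMap.smul_apply, smul_eq_mul,
    Finset.mul_sum]
  rw [Finset.sum_comm]
  exact Finset.sum_congr rfl fun i _ => Finset.sum_congr rfl fun j _ => by ring

lemma acentral (ϖ : A →ₗ[k] A →ₗ[k] k) (ast : A →ₗ[k] A →ₗ[k] A) {n : ℕ}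
    (e f : Fin n → A)
    (hL1 : ∀ x : A, ∑ i : Fin n, ϖ x (f i) • e i = x)
    (hL2 : ∀ x : A, ∑ i : Fin n, ϖ x (e i) • f i = x)
    (a b c : A) :
    aphi3 ϖ a b c (Zexp ast e f)
      = ϖ c (ast a b) + ϖ c (ast b a) - ϖ b (ast a c) - ϖ a (ast b c) := by
  have H1 : ∑ i : Fin n, ∑ j : Fin n, ϖ a (ast (e i) (e j)) * ϖ b (f j) * ϖ c (f i)
      = ϖ a (ast c b) := by
    rw [show (∑ i : Fin n, ∑ j : Fin n, ϖ a (ast (e i) (e j)) * ϖ b (f j) * ϖ c (f i))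
        = ∑ i : Fin n, ∑ j : Fin n, ϖ c (f i) * ϖ b (f j) * ϖ a (ast (e i) (e j)) from
      Finset.sum_congr rfl fun i _ => Finset.sum_congr rfl fun j _ => by ring,
      acollapse, hL1, hL1]
  have H2 : ∑ i : Fin n, ∑ j : Fin n, ϖ a (f j) * ϖ b (ast (e i) (e j)) * ϖ c (f i)
      = ϖ b (ast c a) := by
    rw [show (∑ i : Fin n, ∑ j : Fin n, ϖ a (f j) * ϖ b (ast (e i) (e j)) * ϖ c (f i))
        = ∑ i : Fin n, ∑ j : Fin n, ϖ c (f i) * ϖ a (f j) * ϖ b (ast (e i) (e j)) from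
      Finset.sum_congr rfl fun i _ => Finset.sum_congr rfl fun j _ => by ring,
      acollapse, hL1, hL1]
  have H3 : ∑ i : Fin n, ∑ j : Fin n, ϖ a (e i) * ϖ b (e j) * ϖ c (ast (f i) (f j))
      = ϖ c (ast a b) := by
    rw [acollapse, hL2, hL2]
  have H4 : ∑ i : Fin n, ∑ j : Fin n, ϖ a (e j) * ϖ b (e i) * ϖ c (ast (f i) (f j))
      = ϖ c (ast b a) := by
    rw [show (∑ i : Fin n, ∑ j : Fin n, ϖ a (e j) * ϖ b (e i) * ϖ c (ast (f i) (f j)))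
        = ∑ i : Fin n, ∑ j : Fin n, ϖ b (e i) * ϖ a (e j) * ϖ c (ast (f i) (f j)) from
      Finset.sum_congr rfl fun i _ => Finset.sum_congr rfl fun j _ => by ring,
      acollapse, hL2, hL2]
  have H5 : ∑ i : Fin n, ∑ j : Fin n, ϖ a (e i) * ϖ b (ast (f i) (e j)) * ϖ c (f j)
      = ϖ b (ast a c) := by
    rw [show (∑ i : Fin n, ∑ j : Fin n, ϖ a (e i) * ϖ b (ast (f i) (e j)) * ϖ c (f j))
        = ∑ i : Fin n, ∑ j : Fin n, ϖ a (e i) * ϖ c (f j) * ϖ b (ast (f i) (e j)) from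
      Finset.sum_congr rfl fun i _ => Finset.sum_congr rfl fun j _ => by ring,
      acollapse, hL2, hL1]
  have H6 : ∑ i : Fin n, ∑ j : Fin n, ϖ a (e j) * ϖ b (ast (e i) (f j)) * ϖ c (f i)
      = ϖ b (ast c a) := by
    rw [show (∑ i : Fin n, ∑ j : Fin n, ϖ a (e j) * ϖ b (ast (e i) (f j)) * ϖ c (f i))
        = ∑ i : Fin n, ∑ j : Fin n, ϖ c (f i) * ϖ a (e j) * ϖ b (ast (e i) (f j)) from
      Finset.sum_congr rfl fun i _ => Finset.sum_congr rfl fun j _ => by ring,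
      acollapse, hL1, hL2]
  have H7 : ∑ i : Fin n, ∑ j : Fin n, ϖ a (ast (e i) (f j)) * ϖ b (e j) * ϖ c (f i)
      = ϖ a (ast c b) := by
    rw [show (∑ i : Fin n, ∑ j : Fin n, ϖ a (ast (e i) (f j)) * ϖ b (e j) * ϖ c (f i))
        = ∑ i : Fin n, ∑ j : Fin n, ϖ c (f i) * ϖ b (e j) * ϖ a (ast (e i) (f j)) from
      Finset.sum_congr rfl fun i _ => Finset.sum_congr rfl fun j _ => by ring,
      acollapse, hL1, hL2]
  have H8 : ∑ i : Fin n, ∑ j : Fin n, ϖ a (ast (f i) (e j)) * ϖ b (e i) * ϖ c (f j)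
      = ϖ a (ast b c) := by
    rw [show (∑ i : Fin n, ∑ j : Fin n, ϖ a (ast (f i) (e j)) * ϖ b (e i) * ϖ c (f j))
        = ∑ i : Fin n, ∑ j : Fin n, ϖ b (e i) * ϖ c (f j) * ϖ a (ast (f i) (e j)) from
      Finset.sum_congr rfl fun i _ => Finset.sum_congr rfl fun j _ => by ring,
      acollapse, hL2, hL1]
  rw [Zexp]
  simp only [map_sum, map_add, map_sub, aphi3_tmul]
  simp only [Finset.sum_add_distrib, Finset.sum_sub_distrib]
  rw [H1, H2, H3, H4, H5, H6, H7, H8]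
  ring

lemma azero (ϖ : A →ₗ[k] A →ₗ[k] k) {n : ℕ} (e : Module.Basis (Fin n) k A) (f : Fin n → A)
    (hdual : ∀ i j : Fin n, ϖ (f i) (e j) = if i = j then 1 else 0)
    (t : (A ⊗[k] A) ⊗[k] A)
    (h : ∀ p q r : Fin n, aphi3 ϖ (f p) (f q) (f r) t = 0) : t = 0 := by
  set B : Module.Basis ((Fin n × Fin n) × Fin n) k ((A ⊗[k] A) ⊗[k] A) :=
    (e.tensorProduct e).tensorProduct e with hB
  have key : ∀ p q r : Fin n, aphi3 ϖ (f p) (f q) (f r) = B.coord ((p, q), r) := by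
    intro p q r
    apply B.ext
    rintro ⟨⟨i, j⟩, l⟩
    rw [hB]
    simp only [Module.Basis.tensorProduct_apply, aphi3_tmul, hdual, Module.Basis.coord_apply,
      Module.Basis.repr_self, Finsupp.single_apply]
    by_cases h1 : p = i <;> by_cases h2 : q = j <;> by_cases h3 : r = l <;>
      simp [h1, h2, h3, Prod.ext_iff, Finsupp.single_apply, eq_comm]
  rw [← B.forall_coord_eq_zero_iff]
  rintro ⟨⟨p, q⟩, l⟩
  rw [← key]
  exact h p q l

end Statement13Aux

theorem statement13 (k A : Type) [Field k] [CharZero k]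
    [AddCommGroup A] [Module k A] [FiniteDimensional k A]
    (ast : A →ₗ[k] A →ₗ[k] A) (hast : IsZinbiel ast)
    (ϖ : A →ₗ[k] A →ₗ[k] k)
    (hnd : ∀ a : A, (∀ a' : A, ϖ a a' = 0) → a = 0)
    (n : ℕ) (e : Module.Basis (Fin n) k A) (f : Fin n → A)
    (hdual : ∀ i j : Fin n, ϖ (f i) (e j) = if i = j then 1 else 0)
    (r : A ⊗[k] A) (hr : r = ∑ i : Fin n, (e i : A) ⊗ₜ[k] (f i)) :
    ((TensorProduct.comm k A A) r = r ∧ Zexp ast (fun i => (e i : A)) f = 0)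
      ↔ ((∀ a₁ a₂ : A, ϖ a₁ a₂ = ϖ a₂ a₁) ∧
       (∀ a₁ a₂ a₃ : A,
         ϖ (ast a₁ a₂ + ast a₂ a₁) a₃ = ϖ a₁ (ast a₂ a₃) + ϖ a₂ (ast a₁ a₃))) := by
  classical
  have hE1 : ∀ a : A, ∑ i : Fin n, ϖ (f i) a • (e i : A) = a :=
    Statement13Aux.aE1 ϖ e f hdual
  have hE3 : ∀ a : A, ∑ i : Fin n, ϖ a (e i) • f i = a :=
    Statement13Aux.aE3 ϖ hnd e f hdual
  constructor
  · rintro ⟨hτ, hZ⟩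
    have h1 : ∀ a b : A, Statement13Aux.aphi2 ϖ a b r = ϖ b a := by
      intro a b
      rw [hr]
      simp only [map_sum, Statement13Aux.aphi2_tmul]
      conv_rhs => rw [← hE3 a]
      simp only [map_sum, map_smul, smul_eq_mul]
    have h2 : ∀ a b : A, Statement13Aux.aphi2 ϖ a b ((TensorProduct.comm k A A) r)
        = ϖ a b := by
      intro a b
      rw [hr]
      simp only [map_sum, TensorProduct.comm_tmul, Statement13Aux.aphi2_tmul]
      conv_rhs => rw [← hE3 b]
      simp only [map_sum, map_smul, smul_eq_mul]
      exact Finset.sum_congr rfl fun i _ => mul_comm _ _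
    have hsymm : ∀ a b : A, ϖ a b = ϖ b a := by
      intro a b
      rw [← h2 a b, hτ, h1 a b]
    have hL1 : ∀ x : A, ∑ i : Fin n, ϖ x (f i) • (e i : A) = x := by
      intro x
      rw [show (∑ i : Fin n, ϖ x (f i) • (e i : A))
          = ∑ i : Fin n, ϖ (f i) x • (e i : A) from
        Finset.sum_congr rfl fun i _ => by rw [hsymm]]
      exact hE1 x
    refine ⟨hsymm, fun a b c => ?_⟩
    have h0 := Statement13Aux.acentral ϖ ast (fun i => (e i : A)) f hL1 hE3 a b c
    rw [hZ, map_zero] at h0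
    have e1 : ϖ (ast a b + ast b a) c = ϖ c (ast a b) + ϖ c (ast b a) := by
      rw [map_add, LinearMap.add_apply, hsymm (ast a b) c, hsymm (ast b a) c]
    rw [e1]
    linear_combination -h0
  · rintro ⟨hsymm, hinv⟩
    have hL1 : ∀ x : A, ∑ i : Fin n, ϖ x (f i) • (e i : A) = x := by
      intro x
      rw [show (∑ i : Fin n, ϖ x (f i) • (e i : A))
          = ∑ i : Fin n, ϖ (f i) x • (e i : A) from
        Finset.sum_congr rfl fun i _ => by rw [hsymm]]
      exact hE1 x
    constructor
    · rw [hr, map_sum]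
      simp only [TensorProduct.comm_tmul]
      have lhs_eq : ∑ i : Fin n, (f i) ⊗ₜ[k] (e i : A)
          = ∑ i : Fin n, ∑ j : Fin n, ϖ (f j) (f i) • ((e j : A) ⊗ₜ[k] (e i : A)) := by
        refine Finset.sum_congr rfl fun i _ => ?_
        conv_lhs => rw [← hE1 (f i)]
        rw [TensorProduct.sum_tmul]
        exact Finset.sum_congr rfl fun j _ => by rw [TensorProduct.smul_tmul']
      have rhs_eq : ∑ i : Fin n, (e i : A) ⊗ₜ[k] (f i)
          = ∑ i : Fin n, ∑ j : Fin n, ϖ (f j) (f i) • ((e i : A) ⊗ₜ[k] (e j : A)) := by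
        refine Finset.sum_congr rfl fun i _ => ?_
        conv_lhs => rw [← hE1 (f i)]
        rw [TensorProduct.tmul_sum]
        exact Finset.sum_congr rfl fun j _ => by rw [TensorProduct.tmul_smul]
      rw [lhs_eq, rhs_eq, Finset.sum_comm]
      exact Finset.sum_congr rfl fun j _ => Finset.sum_congr rfl fun i _ => by
        rw [hsymm (f i) (f j)]
    · apply Statement13Aux.azero ϖ e f hdual
      intro p q l
      rw [Statement13Aux.acentral ϖ ast (fun i => (e i : A)) f hL1 hE3]
      have h0 := hinv (f p) (f q) (f l)
      rw [map_add, LinearMap.add_apply, hsymm (ast (f p) (f q)) (f l),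
        hsymm (ast (f q) (f p)) (f l)] at h0
      linear_combination h0
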